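/- arXiv:2104.11003 — 11 statements merged into one kernel-verified Lean document; each statement's English description precedes it below -/
import Mathlib

section
/- For all positive integers m, n and every integer i with 2i < mn, the number p_i(m,n) of partitions in L(m,n) of rank i satisfies p_i(m,n) ≤ p_{i+1}(m,n) (i.e., the rank sizes of L(m,n) are unimodal, increasing up to the middle rank). -/
open MvPolynomial Finsupp

/-! ### Abstract sl2 lemma -/

lemma sl2_injective {M : Type*} [AddCommGroup M] [Module ℚ M] (E F H : Module.End ℚ M)
    (hEF : E * F - F * E = H) (hHF : H * F - F * H = (-2 : ℚ) • F)
    (μ : ℚ) (hμ : μ < 0) (v : M) (hHv : H v = μ • v) (hEv : E v = 0)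
    (N₀ : ℕ) (hFv : (F ^ N₀) v = 0) : v = 0 := by
  have hEFa : ∀ w : M, E (F w) = F (E w) + H w := by
    intro w
    have := congrArg (fun (T : Module.End ℚ M) => T w) hEF
    simp [Module.End.mul_apply] at this
    linear_combination (norm := abel) this
  have hHFa : ∀ w : M, H (F w) = F (H w) - (2 : ℚ) • F w := by
    intro w
    have := congrArg (fun (T : Module.End ℚ M) => T w) hHF
    simp [Module.End.mul_apply] at this
    linear_combination (norm := module) this
  have hH : ∀ k : ℕ, H ((F ^ k) v) = (μ - 2 * k) • (F ^ k) v := by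
    intro k
    induction k with
    | zero => simpa using hHv
    | succ k ih =>
      have : (F ^ (k+1)) v = F ((F ^ k) v) := by rw [pow_succ']; rfl
      rw [this, hHFa, ih, map_smul]
      push_cast
      module
  have hE : ∀ k : ℕ, E ((F ^ (k+1)) v) = (((k : ℚ)+1) * (μ - k)) • (F ^ k) v := by
    intro k
    induction k with
    | zero =>
      have h1 : (F ^ 1) v = F v := by simp
      rw [h1, hEFa, hEv, hHv]
      simp
    | succ k ih =>
      have h1 : (F ^ (k+2)) v = F ((F ^ (k+1)) v) := by rw [pow_succ']; rfl
      rw [h1, hEFa, ih, map_smul, hH]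
      have h2 : F ((F ^ k) v) = (F ^ (k+1)) v := by rw [pow_succ']; rfl
      push_cast
      rw [h2]
      module
  by_contra hv
  have hex : ∃ N, (F ^ N) v = 0 := ⟨N₀, hFv⟩
  classical
  let N := Nat.find hex
  have hN : (F ^ N) v = 0 := Nat.find_spec hex
  have hN0 : N ≠ 0 := by
    intro h
    apply hv
    simpa [h] using hN
  obtain ⟨K, hK⟩ := Nat.exists_eq_succ_of_ne_zero hN0
  have hKlt : (F ^ K) v ≠ 0 := Nat.find_min hex (by omega)
  rw [hK, Nat.succ_eq_add_one] at hN
  have := hE K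
  rw [hN, map_zero] at this
  have hc : ((K : ℚ) + 1) * (μ - K) = 0 := by
    by_contra hc
    exact hKlt ((smul_eq_zero.mp this.symm).resolve_left hc)
  rcases mul_eq_zero.mp hc with h | h
  · have : (K : ℚ) + 1 > 0 := by positivity
    linarith
  · have : μ = K := by linarith
    have : (0:ℚ) ≤ μ := this ▸ Nat.cast_nonneg K
    linarith

/-! ### Weight and degree of exponent vectors -/

def wdeg (a : ℕ →₀ ℕ) : ℕ := a.sum fun j k => j * k
def tdeg (a : ℕ →₀ ℕ) : ℕ := a.sum fun _ k => k

lemma wdeg_add (a b : ℕ →₀ ℕ) : wdeg (a + b) = wdeg a + wdeg b := by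
  unfold wdeg; rw [Finsupp.sum_add_index] <;> intros <;> simp [Nat.mul_add]

lemma tdeg_add (a b : ℕ →₀ ℕ) : tdeg (a + b) = tdeg a + tdeg b := by
  unfold tdeg; rw [Finsupp.sum_add_index] <;> intros <;> simp

lemma wdeg_single (j k : ℕ) : wdeg (Finsupp.single j k) = j * k := by
  unfold wdeg; rw [Finsupp.sum_single_index]; simp

lemma tdeg_single (j k : ℕ) : tdeg (Finsupp.single j k) = k := by
  unfold tdeg; rw [Finsupp.sum_single_index]; rfl

lemma wdeg_zero : wdeg 0 = 0 := by simp [wdeg]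
lemma tdeg_zero : tdeg 0 = 0 := by simp [tdeg]

lemma split_single {a : ℕ →₀ ℕ} {j : ℕ} (hj : j ∈ a.support) :
    (a - Finsupp.single j 1) + Finsupp.single j 1 = a := by
  apply tsub_add_cancel_of_le
  rw [Finsupp.single_le_iff]
  exact Nat.one_le_iff_ne_zero.mpr (Finsupp.mem_support_iff.mp hj)

lemma le_wdeg {a : ℕ →₀ ℕ} {j : ℕ} (hj : j ∈ a.support) : j * a j ≤ wdeg a := by
  unfold wdeg Finsupp.sum
  exact Finset.single_le_sum (f := fun l => l * a l) (fun _ _ => Nat.zero_le _) hj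

lemma le_tdeg {a : ℕ →₀ ℕ} (j : ℕ) : a j ≤ tdeg a := by
  by_cases hj : j ∈ a.support
  · unfold tdeg Finsupp.sum
    exact Finset.single_le_sum (f := fun l => a l) (fun _ _ => Nat.zero_le _) hj
  · rw [Finsupp.notMem_support_iff.mp hj]
    exact Nat.zero_le _

/-! ### The operators -/

noncomputable def opE (n : ℕ) : Derivation ℚ (MvPolynomial ℕ ℚ) (MvPolynomial ℕ ℚ) :=
  MvPolynomial.mkDerivation ℚ fun j => ((n : ℚ) - j) • X (j + 1)
noncomputable def opF : Derivation ℚ (MvPolynomial ℕ ℚ) (MvPolynomial ℕ ℚ) :=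
  MvPolynomial.mkDerivation ℚ fun j => (j : ℚ) • X (j - 1)
noncomputable def opH (n : ℕ) : Derivation ℚ (MvPolynomial ℕ ℚ) (MvPolynomial ℕ ℚ) :=
  MvPolynomial.mkDerivation ℚ fun j => (2 * (j : ℚ) - n) • X j

lemma bracket_EF (n : ℕ) : ⁅opE n, opF⁆ = opH n := by
  apply MvPolynomial.derivation_ext
  intro j
  rw [Derivation.commutator_apply]
  simp only [opE, opF, opH, mkDerivation_X]
  cases j with
  | zero => simp
  | succ k =>
    rw [Derivation.map_smul, Derivation.map_smul, mkDerivation_X, mkDerivation_X]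
    simp only [Nat.add_sub_cancel, Nat.succ_sub_one]
    push_cast
    match_scalars <;> ring

lemma bracket_HF (n : ℕ) : ⁅opH n, opF⁆ = (-2 : ℚ) • opF := by
  apply MvPolynomial.derivation_ext
  intro j
  rw [Derivation.commutator_apply]
  simp only [opF, opH, mkDerivation_X, Derivation.smul_apply]
  cases j with
  | zero => simp
  | succ k =>
    rw [Derivation.map_smul, Derivation.map_smul, mkDerivation_X, mkDerivation_X]
    simp only [Nat.succ_sub_one]
    push_cast
    match_scalars <;> ring

lemma mkD_monomial (c : ℕ → ℚ) (t : ℕ → ℕ) (a : ℕ →₀ ℕ) :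
    MvPolynomial.mkDerivation ℚ (fun j => c j • X (t j)) (monomial a (1:ℚ)) =
      a.sum fun j k => monomial (a - Finsupp.single j 1 + Finsupp.single (t j) 1)
        ((k : ℚ) * c j) := by
  rw [mkDerivation_monomial, one_smul]
  apply Finsupp.sum_congr
  intro j _
  rw [X, smul_comm, smul_eq_mul, monomial_mul, smul_monomial]
  rw [smul_eq_mul]; ring_nf

/-! ### The spans -/

def Tset (m n i : ℕ) : Set (ℕ →₀ ℕ) :=
  {a | tdeg a = m ∧ (∀ j ∈ a.support, j ≤ n) ∧ wdeg a = i}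

noncomputable def Wspan (m n i : ℕ) : Submodule ℚ (MvPolynomial ℕ ℚ) :=
  Submodule.span ℚ ((fun a => monomial a (1:ℚ)) '' Tset m n i)

noncomputable def Vspan (k : ℕ) : Submodule ℚ (MvPolynomial ℕ ℚ) :=
  Submodule.span ℚ ((fun a => monomial a (1:ℚ)) '' {a | wdeg a ≤ k})

lemma exp_move {a : ℕ →₀ ℕ} {j : ℕ} (hj : j ∈ a.support) (t : ℕ) :
    tdeg (a - Finsupp.single j 1 + Finsupp.single t 1) + 0 = tdeg a ∧
    wdeg (a - Finsupp.single j 1 + Finsupp.single t 1) + j = wdeg a + t := by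
  have h1 : tdeg (a - Finsupp.single j 1) + 1 = tdeg a := by
    conv_rhs => rw [← split_single hj]
    rw [tdeg_add, tdeg_single]
  have h2 : wdeg (a - Finsupp.single j 1) + j = wdeg a := by
    conv_rhs => rw [← split_single hj]
    rw [wdeg_add, wdeg_single, mul_one]
  constructor
  · rw [tdeg_add, tdeg_single]; omega
  · rw [wdeg_add, wdeg_single, mul_one]; omega

lemma support_move {a : ℕ →₀ ℕ} {j : ℕ} (t : ℕ) :
    (a - Finsupp.single j 1 + Finsupp.single t 1).support ⊆ a.support ∪ {t} := by
  refine (Finsupp.support_add).trans ?_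
  apply Finset.union_subset_union
  · exact Finsupp.support_tsub
  · exact Finsupp.support_single_subset

lemma opH_monomial (n : ℕ) (a : ℕ →₀ ℕ) :
    opH n (monomial a 1) = ((2 * wdeg a : ℚ) - n * tdeg a) • monomial a (1:ℚ) := by
  rw [opH, mkD_monomial (fun j => 2 * (j:ℚ) - n) (fun j => j), Finsupp.sum]
  have h1 : ∀ j ∈ a.support,
      monomial (a - Finsupp.single j 1 + Finsupp.single j 1) ((a j : ℚ) * (2 * j - n))
        = ((a j : ℚ) * (2 * j - n)) • monomial a (1:ℚ) := by
    intro j hj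
    rw [split_single hj, smul_monomial, smul_eq_mul, mul_one]
  rw [Finset.sum_congr rfl h1, ← Finset.sum_smul]
  congr 1
  have hw : (wdeg a : ℚ) = ∑ j ∈ a.support, (j : ℚ) * (a j : ℚ) := by
    unfold wdeg Finsupp.sum; push_cast; rfl
  have ht : (tdeg a : ℚ) = ∑ j ∈ a.support, (a j : ℚ) := by
    unfold tdeg Finsupp.sum; push_cast; rfl
  rw [hw, ht, Finset.mul_sum, Finset.mul_sum, ← Finset.sum_sub_distrib]
  exact Finset.sum_congr rfl fun j _ => by ring

lemma opE_monomial_mem {m n i : ℕ} {a : ℕ →₀ ℕ} (ha : a ∈ Tset m n i) :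
    opE n (monomial a 1) ∈ Wspan m n (i + 1) := by
  rw [opE, mkD_monomial (fun j => (n:ℚ) - j) (fun j => j + 1), Finsupp.sum]
  apply Submodule.sum_mem
  intro j hj
  obtain ⟨htd, hsupp, hwd⟩ := ha
  by_cases hjn : j = n
  · subst hjn
    simp
  · have hjlt : j < n := lt_of_le_of_ne (hsupp j hj) hjn
    have hmem : (a - Finsupp.single j 1 + Finsupp.single (j+1) 1) ∈ Tset m n (i+1) := by
      obtain ⟨h1, h2⟩ := exp_move hj (j+1)
      refine ⟨by omega, ?_, by omega⟩
      intro l hl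
      rcases Finset.mem_union.mp (support_move (j+1) hl) with h | h
      · exact hsupp l h
      · simp at h; omega
    have : monomial (a - Finsupp.single j 1 + Finsupp.single (j+1) 1) ((a j : ℚ) * ((n:ℚ) - j))
        = ((a j : ℚ) * ((n:ℚ) - j)) • monomial (a - Finsupp.single j 1 + Finsupp.single (j+1) 1) (1:ℚ) := by
      rw [smul_monomial, smul_eq_mul, mul_one]
    rw [this]
    exact Submodule.smul_mem _ _ (Submodule.subset_span ⟨_, hmem, rfl⟩)

lemma opF_monomial_zero {a : ℕ →₀ ℕ} (h : wdeg a = 0) : opF (monomial a 1) = 0 := by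
  rw [opF, mkD_monomial (fun j => (j:ℚ)) (fun j => j - 1), Finsupp.sum]
  apply Finset.sum_eq_zero
  intro j hj
  have h1 : j * a j ≤ 0 := by rw [← h]; exact le_wdeg hj
  have h2 : a j ≠ 0 := Finsupp.mem_support_iff.mp hj
  have hj0 : j = 0 := by
    rcases Nat.mul_eq_zero.mp (Nat.le_zero.mp h1) with h | h
    · exact h
    · exact absurd h h2
  subst hj0
  simp

lemma opF_monomial_mem {k : ℕ} {a : ℕ →₀ ℕ} (h : wdeg a ≤ k + 1) :
    opF (monomial a 1) ∈ Vspan k := by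
  rw [opF, mkD_monomial (fun j => (j:ℚ)) (fun j => j - 1), Finsupp.sum]
  apply Submodule.sum_mem
  intro j hj
  by_cases hj0 : j = 0
  · subst hj0; simp
  · have hmem : (a - Finsupp.single j 1 + Finsupp.single (j-1) 1) ∈ {a : ℕ →₀ ℕ | wdeg a ≤ k} := by
      obtain ⟨_, h2⟩ := exp_move hj (j - 1)
      simp only [Set.mem_setOf_eq]
      omega
    have : monomial (a - Finsupp.single j 1 + Finsupp.single (j-1) 1) ((a j : ℚ) * (j:ℚ))
        = ((a j : ℚ) * (j:ℚ)) • monomial (a - Finsupp.single j 1 + Finsupp.single (j-1) 1) (1:ℚ) := by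
      rw [smul_monomial, smul_eq_mul, mul_one]
    rw [this]
    exact Submodule.smul_mem _ _ (Submodule.subset_span ⟨_, hmem, rfl⟩)

lemma opF_pow_zero : ∀ (k : ℕ) (v : MvPolynomial ℕ ℚ), v ∈ Vspan k →
    ((opF.toLinearMap : Module.End ℚ (MvPolynomial ℕ ℚ)) ^ (k+1)) v = 0 := by
  intro k
  induction k with
  | zero =>
    intro v hv
    rw [pow_one]
    have : Vspan 0 ≤ LinearMap.ker (opF.toLinearMap : Module.End ℚ (MvPolynomial ℕ ℚ)) := by
      rw [Vspan, Submodule.span_le]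
      rintro _ ⟨a, ha, rfl⟩
      exact LinearMap.mem_ker.mpr (opF_monomial_zero (Nat.le_zero.mp ha))
    exact LinearMap.mem_ker.mp (this hv)
  | succ k ih =>
    intro v hv
    have hmap : opF v ∈ Vspan k := by
      have : Vspan (k+1) ≤ (Vspan k).comap (opF.toLinearMap : Module.End ℚ (MvPolynomial ℕ ℚ)) := by
        rw [Vspan, Submodule.span_le]
        rintro _ ⟨a, ha, rfl⟩
        exact Submodule.mem_comap.mpr (opF_monomial_mem ha)
      exact this hv
    have := ih (opF v) hmap
    rw [show k + 1 + 1 = k + 2 from rfl, pow_succ, Module.End.mul_apply]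
    exact this

/-! ### Finiteness and dimension -/

lemma Tset_finite (m n i : ℕ) : (Tset m n i).Finite := by
  apply Set.Finite.subset
    (Set.finite_Iic ((Finset.range (n+1)).sum fun j => Finsupp.single j m))
  rintro a ⟨htd, hsupp, _⟩
  rw [Set.mem_Iic, Finsupp.le_def]
  intro j
  by_cases hj : j ∈ a.support
  · have hjn : j ≤ n := hsupp j hj
    have hA : ((Finset.range (n+1)).sum fun l => Finsupp.single l m) j = m := by
      rw [Finset.sum_apply']
      rw [Finset.sum_eq_single j]
      · simp
      · intro l _ hl; exact Finsupp.single_eq_of_ne' hl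
      · intro h; exact absurd (Finset.mem_range.mpr (by omega)) h
    rw [hA]
    exact htd ▸ le_tdeg j
  · rw [Finsupp.notMem_support_iff.mp hj]
    exact Nat.zero_le _

lemma finrank_Wspan (m n i : ℕ) :
    Module.finrank ℚ (Wspan m n i) = Nat.card (Tset m n i) := by
  classical
  have hfin : (Tset m n i).Finite := Tset_finite m n i
  have hminj : Function.Injective (fun a : ℕ →₀ ℕ => monomial a (1:ℚ)) :=
    monomial_left_injective one_ne_zero
  set s : Set (MvPolynomial ℕ ℚ) := (fun a => monomial a (1:ℚ)) '' Tset m n i with hs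
  have hsfin : s.Finite := hfin.image _
  haveI : Fintype s := hsfin.fintype
  have hli : LinearIndependent ℚ ((↑) : s → MvPolynomial ℕ ℚ) := by
    have hb := (MvPolynomial.basisMonomials ℕ ℚ).linearIndependent
    have hr := hb.linearIndepOn_id
    apply LinearIndepOn.mono hr ?_
    rintro _ ⟨a, _, rfl⟩
    exact ⟨a, by rw [MvPolynomial.coe_basisMonomials]⟩
  rw [Wspan, ← hs, finrank_span_set_eq_card hli]
  rw [← Set.ncard_eq_toFinset_card' s, hs,
    Set.ncard_image_of_injective _ hminj, Nat.card_coe_set_eq]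

/-! ### Bijection with antitone tuples -/

lemma tdeg_toFinsupp (s : Multiset ℕ) : tdeg (Multiset.toFinsupp s) = Multiset.card s := by
  induction s using Multiset.induction_on with
  | empty => simpa using tdeg_zero
  | cons a s ih =>
    rw [← Multiset.singleton_add, map_add, tdeg_add, Multiset.toFinsupp_singleton,
      tdeg_single, Multiset.card_add, ih, Multiset.card_singleton, add_comm]

lemma wdeg_toFinsupp (s : Multiset ℕ) : wdeg (Multiset.toFinsupp s) = s.sum := by
  induction s using Multiset.induction_on with
  | empty => simpa using wdeg_zero
  | cons a s ih =>
    rw [← Multiset.singleton_add, map_add, wdeg_add, Multiset.toFinsupp_singleton,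
      wdeg_single, Multiset.sum_add, ih, Multiset.sum_singleton, mul_one]

noncomputable def toExp {m : ℕ} (f : Fin m → ℕ) : ℕ →₀ ℕ :=
  Multiset.toFinsupp (↑(List.ofFn f))

lemma card_bij (m n i : ℕ) :
    Nat.card {f : Fin m → ℕ // (∀ j, f j ≤ n) ∧ Antitone f ∧ ∑ j, f j = i} =
      Nat.card (Tset m n i) := by
  apply Nat.card_congr
  refine Equiv.ofBijective (fun f => ⟨toExp f.1, ?_, ?_, ?_⟩) ⟨?_, ?_⟩
  · rw [toExp, tdeg_toFinsupp]; simp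
  · intro j hj
    rw [toExp, Multiset.toFinsupp_support] at hj
    rw [Multiset.mem_toFinset, Multiset.mem_coe, List.mem_ofFn] at hj
    obtain ⟨k, rfl⟩ := hj
    exact f.2.1 k
  · rw [toExp, wdeg_toFinsupp, Multiset.sum_coe, List.sum_ofFn]
    exact f.2.2.2
  · rintro ⟨f, hf⟩ ⟨g, hg⟩ h
    simp only [Subtype.mk.injEq] at h ⊢
    have h2 : (↑(List.ofFn f) : Multiset ℕ) = ↑(List.ofFn g) :=
      Multiset.toFinsupp.injective (congrArg Subtype.val h)
    have hperm : List.Perm (List.ofFn f) (List.ofFn g) := Multiset.coe_eq_coe.mp h2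
    have hsf : (List.ofFn f).Pairwise (· ≥ ·) :=
      List.pairwise_ofFn.mpr fun {a b} hab => hf.2.1 hab.le
    have hsg : (List.ofFn g).Pairwise (· ≥ ·) :=
      List.pairwise_ofFn.mpr fun {a b} hab => hg.2.1 hab.le
    exact List.ofFn_injective (List.Perm.eq_of_pairwise' hsf hsg hperm)
  · rintro ⟨a, htd, hsupp, hwd⟩
    classical
    set s : Multiset ℕ := Multiset.toFinsupp.symm a with hs
    have hsa : Multiset.toFinsupp s = a := Multiset.toFinsupp.apply_symm_apply a
    set l : List ℕ := Multiset.sort s (· ≥ ·) with hl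
    have hls : (↑l : Multiset ℕ) = s := Multiset.sort_eq s _
    have hlen : l.length = m := by
      have h0 := tdeg_toFinsupp s
      rw [hsa, htd] at h0
      rw [← hls, Multiset.coe_card] at h0
      omega
    refine ⟨⟨fun k => l.get (Fin.cast hlen.symm k), ?_, ?_, ?_⟩, ?_⟩
    · intro j
      have hmem : l.get (Fin.cast hlen.symm j) ∈ l := List.mem_iff_get.mpr ⟨_, rfl⟩
      have : l.get (Fin.cast hlen.symm j) ∈ a.support := by
        rw [← hsa, Multiset.toFinsupp_support, Multiset.mem_toFinset]
        exact Multiset.mem_sort (· ≥ ·) |>.mp hmem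
      exact hsupp _ this
    · intro k k' hkk'
      rcases eq_or_lt_of_le hkk' with rfl | hlt
      · exact le_rfl
      · have hsort : l.Pairwise (· ≥ ·) := Multiset.pairwise_sort s _
        exact List.pairwise_iff_get.mp hsort _ _ (by simpa using hlt)
    · have h1 : ∑ k : Fin m, l.get (Fin.cast hlen.symm k) = l.sum := by
        rw [← List.sum_ofFn]
        congr 1
        apply List.ext_get (by simp [hlen])
        intro k h1' h2'
        simp
      rw [h1, ← Multiset.sum_coe, hls, ← wdeg_toFinsupp, hsa]
      exact hwd
    · apply Subtype.ext
      simp only [toExp]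
      have : List.ofFn (fun k : Fin m => l.get (Fin.cast hlen.symm k)) = l := by
        apply List.ext_get (by simp [hlen])
        intro k h1' h2'
        simp
      rw [this, hls, hsa]


/-- `L(m,n)` is rank unimodal below the middle rank: `p_i(m,n) ≤ p_{i+1}(m,n)`
whenever `2 i < m n`. -/
theorem L_rank_unimodal (m n : ℕ) (hm : 0 < m) (hn : 0 < n) (i : ℕ) (hi : 2 * i < m * n) :
    Nat.card {f : Fin m → ℕ // (∀ j, f j ≤ n) ∧ Antitone f ∧ ∑ j, f j = i} ≤
    Nat.card {f : Fin m → ℕ // (∀ j, f j ≤ n) ∧ Antitone f ∧ ∑ j, f j = i + 1} := by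
  classical
  rw [card_bij m n i, card_bij m n (i+1), ← finrank_Wspan m n i, ← finrank_Wspan m n (i+1)]
  set E : Module.End ℚ (MvPolynomial ℕ ℚ) := (opE n).toLinearMap with hE
  set F : Module.End ℚ (MvPolynomial ℕ ℚ) := opF.toLinearMap with hF
  set H : Module.End ℚ (MvPolynomial ℕ ℚ) := (opH n).toLinearMap with hH
  have hEF : E * F - F * E = H := by
    have h := congrArg (Derivation.toLinearMap) (bracket_EF n)
    rw [Derivation.commutator_coe_linear_map] at h
    rw [hE, hF, hH, ← h, Ring.lie_def]
  have hHF : H * F - F * H = (-2 : ℚ) • F := by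
    have h := congrArg (Derivation.toLinearMap) (bracket_HF n)
    rw [Derivation.commutator_coe_linear_map] at h
    rw [Ring.lie_def] at h
    rw [hH, hF, h]
    rfl
  have hmap : ∀ v ∈ Wspan m n i, E v ∈ Wspan m n (i+1) := by
    intro v hv
    have hle : Wspan m n i ≤ (Wspan m n (i+1)).comap E := by
      rw [Wspan, Submodule.span_le]
      rintro _ ⟨a, ha, rfl⟩
      exact Submodule.mem_comap.mpr (opE_monomial_mem ha)
    exact hle hv
  haveI : FiniteDimensional ℚ (Wspan m n (i+1)) :=
    FiniteDimensional.span_of_finite ℚ ((Tset_finite m n (i+1)).image _)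
  set μ : ℚ := 2 * i - m * n with hμdef
  have hμ : μ < 0 := by
    rw [hμdef]
    have : (2 * i : ℚ) < (m * n : ℚ) := by exact_mod_cast hi
    push_cast at this ⊢
    linarith
  have hker : ∀ v ∈ Wspan m n i, E v = 0 → v = 0 := by
    intro v hv hEv
    have hHv : H v = μ • v := by
      have hle : Wspan m n i ≤ LinearMap.ker (H - μ • LinearMap.id) := by
        rw [Wspan, Submodule.span_le]
        rintro _ ⟨a, ⟨htd, _, hwd⟩, rfl⟩
        rw [SetLike.mem_coe, LinearMap.mem_ker, LinearMap.sub_apply, LinearMap.smul_apply,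
          LinearMap.id_apply, sub_eq_zero]
        have := opH_monomial n a
        rw [htd, hwd] at this
        rw [hH]
        show opH n (monomial a 1) = μ • monomial a 1
        rw [this, hμdef]
        congr 1
        push_cast
        ring
      have := hle hv
      rw [LinearMap.mem_ker, LinearMap.sub_apply, LinearMap.smul_apply, LinearMap.id_apply,
        sub_eq_zero] at this
      exact this
    have hFv : (F ^ (i+1)) v = 0 := by
      apply opF_pow_zero i
      have hle : Wspan m n i ≤ Vspan i := by
        apply Submodule.span_mono
        apply Set.image_mono
        rintro a ⟨_, _, hwd⟩
        exact le_of_eq hwd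
      exact hle hv
    exact sl2_injective E F H hEF hHF μ hμ v hHv hEv (i+1) hFv
  have hres : Function.Injective (E.restrict hmap) := by
    rw [← LinearMap.ker_eq_bot, LinearMap.ker_eq_bot']
    intro v hv
    apply Subtype.ext
    have : E v.1 = 0 := by
      have := congrArg Subtype.val hv
      exact this
    exact hker v.1 v.2 this
  exact LinearMap.finrank_le_finrank_of_injective hres
end

section
/- There is no triple λ = (λ1,λ2,λ3) of integers with λ1 ≥ 1 and λ1 ≥ λ2 ≥ λ3 ≥ 0 satisfying simultaneously: (i) λ ∉ E_{3,λ1}; (ii) λ2 + λ3 is even; and (iii) (λ1−1, λ2+1, λ3) ∈ E_{3,λ1−1}. -/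
/-- Membership in the poset `L(3,n)`: triples `(p₁,p₂,p₃)` with `n ≥ p₁ ≥ p₂ ≥ p₃ ≥ 0`. -/
def L3 (n : ℤ) : Set (ℤ × ℤ × ℤ) :=
  {p | p.1 ≤ n ∧ p.2.1 ≤ p.1 ∧ p.2.2 ≤ p.2.1 ∧ 0 ≤ p.2.2}

/-- The starting set `S_{3,m}`. -/
def S3 (m : ℤ) : Set (ℤ × ℤ × ℤ) :=
  {p | ∃ k ℓ : ℤ, 0 ≤ k ∧ 0 ≤ ℓ ∧ ℓ ≠ 1 ∧ 4 * k + ℓ ≤ m ∧ 2 * (6 * k + ℓ) ≤ 3 * m ∧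
    p = (4 * k + ℓ, 2 * k, 0)}

/-- The dual of a partition in `L(3,m)`. -/
def dual (m : ℤ) (p : ℤ × ℤ × ℤ) : ℤ × ℤ × ℤ :=
  (m - p.2.2, m - p.2.1, m - p.1)

/-- The end set `E_{3,m} = {λ* : λ ∈ S_{3,m}}`. -/
def E3 (m : ℤ) : Set (ℤ × ℤ × ℤ) := dual m '' S3 m

open Classical in
/-- The order matching `φ`. -/
noncomputable def phi (p : ℤ × ℤ × ℤ) : ℤ × ℤ × ℤ :=
  if p ∈ E3 p.1 then
    (p.1 + 1, p.2.1, p.2.2)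
  else if (Even (p.2.1 + p.2.2) ∧ (p.1 - 1, p.2.1 + 1, p.2.2) ∉ E3 (p.1 - 1)) ∨
      (¬ Even (p.2.1 + p.2.2) ∧ (p.1 - 1, p.2.1, p.2.2 + 1) ∈ E3 (p.1 - 1)) then
    (p.1, p.2.1 + 1, p.2.2)
  else
    (p.1, p.2.1, p.2.2 + 1)

/-- There is no partition `λ` with `λ₁ ≥ 1` such that `λ ∉ E_{3,λ₁}`, `λ₂ + λ₃` is
even, and `(λ₁-1, λ₂+1, λ₃) ∈ E_{3,λ₁-1}`. -/
theorem no_vacuous_case :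
    ¬ ∃ l1 l2 l3 : ℤ, 1 ≤ l1 ∧ l2 ≤ l1 ∧ l3 ≤ l2 ∧ 0 ≤ l3 ∧
      (l1, l2, l3) ∉ E3 l1 ∧ Even (l2 + l3) ∧
      (l1 - 1, l2 + 1, l3) ∈ E3 (l1 - 1) := by
  rintro ⟨l1, l2, l3, h1, h21, h32, h30, hnot, heven, q, ⟨k, ℓ, hk, hℓ, hℓ1, hle, hle2, rfl⟩, hq⟩
  simp only [dual, Prod.mk.injEq] at hq
  obtain ⟨-, h2, h3⟩ := hq
  obtain ⟨r, hr⟩ := heven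
  exact hnot ⟨(4*(k+1)+(ℓ-3), 2*(k+1), 0),
    ⟨k+1, ℓ-3, by omega, by omega, by omega, by omega, by omega, rfl⟩,
    by simp only [dual, Prod.mk.injEq]; omega⟩
end

section
/- The map φ is well defined from L(3,n) \ E_{3,n} to L(3,n) \ S_{3,n}: for every λ ∈ L(3,n) \ E_{3,n}, exactly one of the four defining cases of φ applies, φ(λ) is obtained from λ by increasing exactly one coordinate by 1 (so φ(λ) ∈ L(3,n), λ < φ(λ), and |φ(λ)| = |λ| + 1), and φ(λ) ∉ S_{3,n}. -/
/-- Case 1 of the definition of `φ`. -/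
def Case1 (p : ℤ × ℤ × ℤ) : Prop := p ∈ E3 p.1

/-- Case 2 of the definition of `φ`. -/
def Case2 (p : ℤ × ℤ × ℤ) : Prop :=
  p ∉ E3 p.1 ∧ Even (p.2.1 + p.2.2) ∧ (p.1 - 1, p.2.1 + 1, p.2.2) ∉ E3 (p.1 - 1)

/-- Case 3 of the definition of `φ`. -/
def Case3 (p : ℤ × ℤ × ℤ) : Prop :=
  p ∉ E3 p.1 ∧ ¬ Even (p.2.1 + p.2.2) ∧ (p.1 - 1, p.2.1, p.2.2 + 1) ∈ E3 (p.1 - 1)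

/-- Case 4 of the definition of `φ`. -/
def Case4 (p : ℤ × ℤ × ℤ) : Prop :=
  p ∉ E3 p.1 ∧ ¬ Even (p.2.1 + p.2.2) ∧ (p.1 - 1, p.2.1, p.2.2 + 1) ∉ E3 (p.1 - 1)

lemma mem_S3_iff (m a b c : ℤ) : (a, b, c) ∈ S3 m ↔
    c = 0 ∧ b % 2 = 0 ∧ 0 ≤ b ∧ 2 * b ≤ a ∧ a - 2 * b ≠ 1 ∧ a ≤ m ∧ 2 * (a + b) ≤ 3 * m := by
  constructor
  · rintro ⟨k, ℓ, hk, hl, hl1, hc1, hc2, heq⟩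
    simp only [Prod.mk.injEq] at heq
    omega
  · rintro ⟨h1, h2, h3, h4, h5, h6, h7⟩
    refine ⟨b / 2, a - 2 * b, by omega, by omega, by omega, by omega, by omega, ?_⟩
    simp only [Prod.mk.injEq]
    omega

lemma mem_E3_iff (m a b c : ℤ) : (a, b, c) ∈ E3 m ↔
    a = m ∧ (m - b) % 2 = 0 ∧ b ≤ m ∧ 0 ≤ 2 * b - m - c ∧ 2 * b - m - c ≠ 1 ∧ 0 ≤ c ∧
      m ≤ 2 * (b + c) := by
  constructor
  · rintro ⟨⟨x, y, z⟩, hq, hdual⟩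
    rw [mem_S3_iff] at hq
    simp only [dual, Prod.mk.injEq] at hdual
    omega
  · rintro h
    refine ⟨(m - c, m - b, m - a), ?_, ?_⟩
    · rw [mem_S3_iff]; omega
    · simp only [dual, Prod.mk.injEq]; omega

/-- `φ` is well defined from `L(3,n) \ E_{3,n}` to `L(3,n) \ S_{3,n}`: exactly one
of the four defining cases applies, `φ` increases exactly one coordinate by `1`
(hence `φ(λ) ∈ L(3,n)`, `λ < φ(λ)`, and `|φ(λ)| = |λ| + 1`), and `φ(λ) ∉ S_{3,n}`. -/
theorem phi_well_defined (n : ℤ) (hn : 0 < n) (p : ℤ × ℤ × ℤ)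
    (hp : p ∈ L3 n) (hpE : p ∉ E3 n) :
    ((Case1 p ∧ ¬ Case2 p ∧ ¬ Case3 p ∧ ¬ Case4 p) ∨
     (Case2 p ∧ ¬ Case1 p ∧ ¬ Case3 p ∧ ¬ Case4 p) ∨
     (Case3 p ∧ ¬ Case1 p ∧ ¬ Case2 p ∧ ¬ Case4 p) ∨
     (Case4 p ∧ ¬ Case1 p ∧ ¬ Case2 p ∧ ¬ Case3 p)) ∧
    (phi p = (p.1 + 1, p.2.1, p.2.2) ∨ phi p = (p.1, p.2.1 + 1, p.2.2) ∨
      phi p = (p.1, p.2.1, p.2.2 + 1)) ∧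
    phi p ∈ L3 n ∧ p < phi p ∧
    (phi p).1 + (phi p).2.1 + (phi p).2.2 = p.1 + p.2.1 + p.2.2 + 1 ∧
    phi p ∉ S3 n := by
  obtain ⟨a, b, c⟩ := p
  simp only [L3, Set.mem_setOf_eq] at hp
  obtain ⟨h1, h2, h3, h4⟩ := hp
  rw [mem_E3_iff] at hpE
  by_cases c1 : (a, b, c) ∈ E3 a
  · -- Case 1
    have c1a := (mem_E3_iff a a b c).mp c1
    have hphi : phi (a, b, c) = (a + 1, b, c) := by
      unfold phi
      rw [if_pos (show (a, b, c) ∈ E3 (a, b, c).1 from c1)]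
    rw [hphi]
    refine ⟨Or.inl ⟨c1, fun h => h.1 c1, fun h => h.1 c1, fun h => h.1 c1⟩,
      Or.inl rfl, (by simp only [L3, Set.mem_setOf_eq]; omega), ?_, by dsimp only; omega, ?_⟩
    · simp only [Prod.mk_lt_mk, Prod.mk_le_mk]
      omega
    · rw [mem_S3_iff]; omega
  · -- not in E3 a
    have c1a := c1; rw [mem_E3_iff] at c1a
    by_cases hev : Even (b + c)
    · -- Case 2
      have heva := Int.even_iff.mp hev
      have hq2 : (a - 1, b + 1, c) ∉ E3 (a - 1) := by
        rw [mem_E3_iff]; omega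
      have hphi : phi (a, b, c) = (a, b + 1, c) := by
        unfold phi
        rw [if_neg (show (a, b, c) ∈ E3 (a, b, c).1 → False from c1),
          if_pos (Or.inl ⟨hev, hq2⟩ :
            (Even ((a,b,c).2.1 + (a,b,c).2.2) ∧ ((a,b,c).1 - 1, (a,b,c).2.1 + 1, (a,b,c).2.2) ∉ E3 ((a,b,c).1 - 1)) ∨
            (¬ Even ((a,b,c).2.1 + (a,b,c).2.2) ∧ ((a,b,c).1 - 1, (a,b,c).2.1, (a,b,c).2.2 + 1) ∈ E3 ((a,b,c).1 - 1)))]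
      rw [hphi]
      refine ⟨Or.inr (Or.inl ⟨⟨c1, hev, hq2⟩, c1, fun h => h.2.1 hev, fun h => h.2.1 hev⟩),
        Or.inr (Or.inl rfl), (by simp only [L3, Set.mem_setOf_eq]; omega), ?_, by dsimp only; omega, ?_⟩
      · simp only [Prod.mk_lt_mk, Prod.mk_le_mk]
        omega
      · rw [mem_S3_iff]; omega
    · -- odd
      have heva := Int.not_even_iff.mp hev
      by_cases hq3 : (a - 1, b, c + 1) ∈ E3 (a - 1)
      · -- Case 3
        have hq3a := (mem_E3_iff (a - 1) (a - 1) b (c + 1)).mp hq3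
        have hphi : phi (a, b, c) = (a, b + 1, c) := by
          unfold phi
          rw [if_neg (show (a, b, c) ∈ E3 (a, b, c).1 → False from c1),
            if_pos (Or.inr ⟨hev, hq3⟩ :
              (Even ((a,b,c).2.1 + (a,b,c).2.2) ∧ ((a,b,c).1 - 1, (a,b,c).2.1 + 1, (a,b,c).2.2) ∉ E3 ((a,b,c).1 - 1)) ∨
              (¬ Even ((a,b,c).2.1 + (a,b,c).2.2) ∧ ((a,b,c).1 - 1, (a,b,c).2.1, (a,b,c).2.2 + 1) ∈ E3 ((a,b,c).1 - 1)))]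
        rw [hphi]
        refine ⟨Or.inr (Or.inr (Or.inl ⟨⟨c1, hev, hq3⟩, c1, fun h => hev h.2.1,
          fun h => h.2.2 hq3⟩)),
          Or.inr (Or.inl rfl), (by simp only [L3, Set.mem_setOf_eq]; omega), ?_, by dsimp only; omega, ?_⟩
        · simp only [Prod.mk_lt_mk, Prod.mk_le_mk]
          omega
        · rw [mem_S3_iff]; omega
      · -- Case 4
        have hq3a := hq3; rw [mem_E3_iff] at hq3a
        have hphi : phi (a, b, c) = (a, b, c + 1) := by
          unfold phi
          rw [if_neg (show (a, b, c) ∈ E3 (a, b, c).1 → False from c1),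
            if_neg (show ((Even ((a,b,c).2.1 + (a,b,c).2.2) ∧ ((a,b,c).1 - 1, (a,b,c).2.1 + 1, (a,b,c).2.2) ∉ E3 ((a,b,c).1 - 1)) ∨
              (¬ Even ((a,b,c).2.1 + (a,b,c).2.2) ∧ ((a,b,c).1 - 1, (a,b,c).2.1, (a,b,c).2.2 + 1) ∈ E3 ((a,b,c).1 - 1))) → False from by
              rintro (⟨h, -⟩ | ⟨-, h⟩)
              · exact hev h
              · exact hq3 h)]
        rw [hphi]
        refine ⟨Or.inr (Or.inr (Or.inr ⟨⟨c1, hev, hq3⟩, c1, fun h => hev h.2.1,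
          fun h => hq3 h.2.2⟩)),
          Or.inr (Or.inr rfl), (by simp only [L3, Set.mem_setOf_eq]; omega), ?_, by dsimp only; omega, ?_⟩
        · simp only [Prod.mk_lt_mk, Prod.mk_le_mk]
          omega
        · rw [mem_S3_iff]; omega
end

section
/- The map φ is injective on L(3,n) \ E_{3,n}: if λ, μ ∈ L(3,n) \ E_{3,n} and φ(λ) = φ(μ), then λ = μ. -/
lemma mem_E3 (m k ℓ x y z : ℤ) (h1 : 0 ≤ k) (h2 : 0 ≤ ℓ) (h3 : ℓ ≠ 1)
    (h4 : 4 * k + ℓ ≤ m) (h5 : 2 * (6 * k + ℓ) ≤ 3 * m)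
    (hx : x = m) (hy : y = m - 2 * k) (hz : z = m - (4 * k + ℓ)) :
    (x, y, z) ∈ E3 m := by
  refine ⟨(4 * k + ℓ, 2 * k, 0), ⟨k, ℓ, h1, h2, h3, h4, h5, rfl⟩, ?_⟩
  simp only [dual]
  rw [hx, hy, hz]
  norm_num

lemma E3_elim {m x y z : ℤ} (h : (x, y, z) ∈ E3 m) :
    ∃ k ℓ : ℤ, 0 ≤ k ∧ 0 ≤ ℓ ∧ ℓ ≠ 1 ∧ 4 * k + ℓ ≤ m ∧ 2 * (6 * k + ℓ) ≤ 3 * m ∧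
      x = m ∧ y = m - 2 * k ∧ z = m - (4 * k + ℓ) := by
  obtain ⟨q, ⟨k, ℓ, h1, h2, h3, h4, h5, rfl⟩, hq⟩ := h
  simp only [dual, Prod.mk.injEq] at hq
  exact ⟨k, ℓ, h1, h2, h3, h4, h5, by omega, by omega, by omega⟩

/-- Collision between a case-1 `a` and a case-2 `b` is impossible. -/
lemma case12 (a1 a2 a3 b1 b2 b3 : ℤ)
    (hA : (a1, a2, a3) ∈ E3 a1)
    (hB : Even (b2 + b3) ∧ (b1 - 1, b2 + 1, b3) ∉ E3 (b1 - 1) ∨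
      ¬Even (b2 + b3) ∧ (b1 - 1, b2, b3 + 1) ∈ E3 (b1 - 1))
    (e : (a1 + 1, a2, a3) = (b1, b2 + 1, b3)) : False := by
  simp only [Prod.mk.injEq] at e
  obtain ⟨e1, e2, e3⟩ := e
  obtain ⟨k, ℓ, h1, h2, h3, h4, h5, hx, hy, hz⟩ := E3_elim hA
  rcases hB with ⟨-, hn⟩ | ⟨-, hm⟩
  · exact hn (mem_E3 _ k ℓ _ _ _ h1 h2 h3 (by omega) (by omega)
      (by omega) (by omega) (by omega))
  · obtain ⟨k', ℓ', h1', h2', h3', h4', h5', hx', hy', hz'⟩ := E3_elim hm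
    omega

/-- Collision between a case-1 `a` and a case-3 `b` is impossible. -/
lemma case13 (a1 a2 a3 b1 b2 b3 : ℤ)
    (hA : (a1, a2, a3) ∈ E3 a1)
    (hB : ¬(Even (b2 + b3) ∧ (b1 - 1, b2 + 1, b3) ∉ E3 (b1 - 1) ∨
      ¬Even (b2 + b3) ∧ (b1 - 1, b2, b3 + 1) ∈ E3 (b1 - 1)))
    (e : (a1 + 1, a2, a3) = (b1, b2, b3 + 1)) : False := by
  simp only [Prod.mk.injEq] at e
  obtain ⟨e1, e2, e3⟩ := e
  push_neg at hB
  obtain ⟨hB1, hB2⟩ := hB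
  obtain ⟨k, ℓ, h1, h2, h3, h4, h5, hx, hy, hz⟩ := E3_elim hA
  by_cases hp : Even (b2 + b3)
  · obtain ⟨k', ℓ', h1', h2', h3', h4', h5', hx', hy', hz'⟩ := E3_elim (hB1 hp)
    omega
  · exact hB2 hp (mem_E3 _ k ℓ _ _ _ h1 h2 h3 (by omega) (by omega)
      (by omega) (by omega) (by omega))

/-- Collision between a case-2 `a` and a case-3 `b` is impossible. -/
lemma case23 (a1 a2 a3 b1 b2 b3 : ℤ) (hb4 : 0 ≤ b3)
    (hA : Even (a2 + a3) ∧ (a1 - 1, a2 + 1, a3) ∉ E3 (a1 - 1) ∨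
      ¬Even (a2 + a3) ∧ (a1 - 1, a2, a3 + 1) ∈ E3 (a1 - 1))
    (hB1 : (b1, b2, b3) ∉ E3 b1)
    (hB : ¬(Even (b2 + b3) ∧ (b1 - 1, b2 + 1, b3) ∉ E3 (b1 - 1) ∨
      ¬Even (b2 + b3) ∧ (b1 - 1, b2, b3 + 1) ∈ E3 (b1 - 1)))
    (e : (a1, a2 + 1, a3) = (b1, b2, b3 + 1)) : False := by
  simp only [Prod.mk.injEq] at e
  obtain ⟨e1, e2, e3⟩ := e
  push_neg at hB
  obtain ⟨hBe, hBo⟩ := hB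
  rcases hA with ⟨hev, -⟩ | ⟨hodd, hm⟩
  · obtain ⟨r, hr⟩ := hev
    have hev' : Even (b2 + b3) := ⟨r, by omega⟩
    obtain ⟨k, ℓ, h1, h2, h3, h4, h5, hx, hy, hz⟩ := E3_elim (hBe hev')
    -- here ℓ is odd, hence ℓ ≥ 3 and ℓ ≠ 4
    exact hB1 (mem_E3 _ (k + 1) (ℓ - 3) _ _ _ (by omega) (by omega) (by omega)
      (by omega) (by omega) (by omega) (by omega) (by omega))
  · rw [Int.not_even_iff_odd] at hodd
    obtain ⟨r, hr⟩ := hodd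
    obtain ⟨k, ℓ, h1, h2, h3, h4, h5, hx, hy, hz⟩ := E3_elim hm
    -- here ℓ is even
    exact hB1 (mem_E3 _ k (ℓ + 3) _ _ _ (by omega) (by omega) (by omega)
      (by omega) (by omega) (by omega) (by omega) (by omega))

/-- `φ` is injective on `L(3,n) \ E_{3,n}`. -/
theorem phi_injOn (n : ℤ) (hn : 0 < n) :
    Set.InjOn phi (L3 n \ E3 n) := by
  rintro ⟨a1, a2, a3⟩ ⟨⟨ha1, ha2, ha3, ha4⟩, haE⟩ ⟨b1, b2, b3⟩ ⟨⟨hb1, hb2, hb3, hb4⟩, hbE⟩ h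
  have ha4' : (0:ℤ) ≤ a3 := ha4
  have hb4' : (0:ℤ) ≤ b3 := hb4
  simp only [phi] at h
  split_ifs at h with c1 c2 c3 c4 c5 c6 c7 c8
  -- case (1,1)
  · simp only [Prod.mk.injEq] at h ⊢; omega
  -- case (1,2)
  · exact absurd (case12 a1 a2 a3 b1 b2 b3 c1 c3 h) not_false
  -- case (1,3)
  · exact absurd (case13 a1 a2 a3 b1 b2 b3 c1 c3 h) not_false
  -- case (2,1)
  · exact absurd (case12 b1 b2 b3 a1 a2 a3 c5 c4 h.symm) not_false
  -- case (2,2)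
  · simp only [Prod.mk.injEq] at h ⊢; omega
  -- case (2,3)
  · exact absurd (case23 a1 a2 a3 b1 b2 b3 hb4' c4 c5 c6 h) not_false
  -- case (3,1)
  · exact absurd (case13 b1 b2 b3 a1 a2 a3 c7 c4 h.symm) not_false
  -- case (3,2)
  · exact absurd (case23 b1 b2 b3 a1 a2 a3 ha4' c8 c1 c4 h.symm) not_false
  -- case (3,3)
  · simp only [Prod.mk.injEq] at h ⊢; omega
end

section
/- The map φ is a bijection from L(3,n) \ E_{3,n} onto L(3,n) \ S_{3,n}. -/
lemma mem_S3 {m : ℤ} {p : ℤ × ℤ × ℤ} :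
    p ∈ S3 m ↔ p.2.2 = 0 ∧ p.2.1 % 2 = 0 ∧ 0 ≤ p.2.1 ∧ 2 * p.2.1 ≤ p.1 ∧
      p.1 ≠ 2 * p.2.1 + 1 ∧ p.1 ≤ m ∧ 2 * (p.1 + p.2.1) ≤ 3 * m := by
  obtain ⟨a, b, c⟩ := p
  constructor
  · rintro ⟨k, l, hk, hl, hl1, h1, h2, h⟩
    simp only [Prod.mk.injEq] at h
    simp only []
    omega
  · rintro ⟨h1, h2, h3, h4, h5, h6, h7⟩
    simp only [] at h1 h2 h3 h4 h5 h6 h7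
    refine ⟨b / 2, a - 2 * b, by omega, by omega, by omega, by omega, by omega, ?_⟩
    simp only [Prod.mk.injEq, and_true, true_and]
    omega

lemma mem_E3_s8 {m : ℤ} {p : ℤ × ℤ × ℤ} :
    p ∈ E3 m ↔ p.1 = m ∧ (m + p.2.1) % 2 = 0 ∧ p.2.1 ≤ m ∧ 0 ≤ p.2.2 ∧
      m + p.2.2 ≤ 2 * p.2.1 ∧ 2 * p.2.1 ≠ m + p.2.2 + 1 := by
  obtain ⟨a, b, c⟩ := p
  constructor
  · rintro ⟨⟨x, y, z⟩, hx, h⟩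
    rw [mem_S3] at hx
    simp only [dual, Prod.mk.injEq] at h hx
    simp only []
    omega
  · rintro ⟨h1, h2, h3, h4, h5, h6⟩
    simp only [] at h1 h2 h3 h4 h5 h6
    obtain ⟨k, hk⟩ : ∃ k, m - b = 2 * k := ⟨(m - b) / 2, by omega⟩
    refine ⟨(4 * k + (2 * b - m - c), 2 * k, 0), ?_, ?_⟩
    · rw [mem_S3]
      refine ⟨rfl, ?_⟩
      simp only []
      omega
    · simp only [dual, Prod.mk.injEq]
      omega

set_option maxHeartbeats 8000000 in
/-- `φ` is a bijection from `L(3,n) \ E_{3,n}` onto `L(3,n) \ S_{3,n}`. -/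
theorem phi_bijOn (n : ℤ) (hn : 0 < n) :
    Set.BijOn phi (L3 n \ E3 n) (L3 n \ S3 n) := by
  refine ⟨?_, ?_, ?_⟩
  · -- MapsTo
    rintro ⟨a, b, c⟩ ⟨hL, hE⟩
    unfold phi
    split_ifs with h1 h2 <;>
    · simp only [Set.mem_diff, L3, Set.mem_setOf_eq, mem_S3, mem_E3_s8, Int.even_iff, true_and, and_true, not_true, not_false_iff, eq_self_iff_true] at *
      omega
  · -- InjOn
    rintro ⟨a, b, c⟩ ⟨hL, hE⟩ ⟨d, e, f⟩ ⟨hL', hE'⟩ h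
    simp only [L3, Set.mem_setOf_eq] at hL hL'
    clear hE hE' hn
    unfold phi at h
    split_ifs at h with h1 h2 h3 h4 h5 h6 h7 h8 <;>
    · simp only [mem_E3_s8, Int.even_iff, true_and, and_true, not_true, not_false_iff,
        eq_self_iff_true, Prod.mk.injEq] at *
      omega
  · -- SurjOn
    rintro ⟨a, b, c⟩ ⟨hL, hS⟩
    simp only [L3, Set.mem_setOf_eq] at hL
    rw [mem_S3] at hS
    simp only [] at hL hS
    by_cases h1 : (a - 1, b, c) ∈ E3 (a - 1)
    · refine ⟨(a - 1, b, c), ?_, ?_⟩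
      · simp only [Set.mem_diff, L3, Set.mem_setOf_eq, mem_E3_s8, Int.even_iff, true_and, and_true, not_true, not_false_iff, eq_self_iff_true] at h1 ⊢
        omega
      · unfold phi
        simp only [mem_E3_s8, Int.even_iff, true_and, and_true, not_true, not_false_iff, eq_self_iff_true] at h1 ⊢
        split_ifs with k1 k2 <;>
        · simp only [Prod.mk.injEq, and_true, true_and]
          omega
    · by_cases h2 : ((a, b - 1, c) ∉ E3 a ∧
        ((Even ((b - 1) + c) ∧ (a - 1, (b - 1) + 1, c) ∉ E3 (a - 1)) ∨
         (¬ Even ((b - 1) + c) ∧ (a - 1, b - 1, c + 1) ∈ E3 (a - 1))))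
      · refine ⟨(a, b - 1, c), ?_, ?_⟩
        · simp only [mem_E3_s8, Int.even_iff, true_and, and_true, not_true, not_false_iff, eq_self_iff_true] at h1 h2
          simp only [Set.mem_diff, L3, Set.mem_setOf_eq, mem_E3_s8]
          omega
        · unfold phi
          simp only [mem_E3_s8, Int.even_iff, true_and, and_true, not_true, not_false_iff, eq_self_iff_true] at h1 h2 ⊢
          split_ifs with k1 k2 <;>
          · simp only [Prod.mk.injEq, and_true, true_and]
            omega
      · refine ⟨(a, b, c - 1), ?_, ?_⟩
        · simp only [mem_E3_s8, Int.even_iff, true_and, and_true, not_true, not_false_iff, eq_self_iff_true] at h1 h2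
          simp only [Set.mem_diff, L3, Set.mem_setOf_eq, mem_E3_s8]
          omega
        · unfold phi
          simp only [mem_E3_s8, Int.even_iff, true_and, and_true, not_true, not_false_iff, eq_self_iff_true] at h1 h2 ⊢
          split_ifs with k1 k2 <;>
          · simp only [Prod.mk.injEq, and_true, true_and]
            omega
end

section
/- For every positive integer n and every integer i with 2i < 3n, every λ ∈ L(3,n) of rank i lies outside E_{3,n}, and φ restricted to the rank-i elements of L(3,n) is an injective map into the rank-(i+1) elements of L(3,n) with λ < φ(λ); that is, φ gives an explicit order matching from L_i(3,n) to L_{i+1}(3,n) for every i below the middle rank. -/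
/-- Arithmetic translation of membership in `E3`. -/
def EE (m b c : ℤ) : Prop :=
  (m - b) % 2 = 0 ∧ b ≤ m ∧ 0 ≤ c ∧ c + m ≤ 2*b ∧ c + m + 1 ≠ 2*b ∧ m ≤ 2*b + 2*c

/-- Arithmetic translation of the second branch condition of `phi`. -/
def BB (a b c : ℤ) : Prop :=
  ((b + c) % 2 = 0 ∧ ¬ EE (a - 1) (b + 1) c) ∨ ((b + c) % 2 ≠ 0 ∧ EE (a - 1) b (c + 1))

/-- Arithmetic characterization of membership in `E3 m`. -/
lemma mem_E3_s9 {m a b c : ℤ} : (a, b, c) ∈ E3 m ↔ a = m ∧ EE m b c := by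
  constructor
  · rintro ⟨q, ⟨k, ℓ, hk, hℓ, hℓ1, h1, h2, rfl⟩, hq⟩
    simp only [dual, Prod.mk.injEq] at hq
    refine ⟨by omega, by omega, by omega, by omega, by omega, by omega, by omega⟩
  · rintro ⟨rfl, h2, h3, h4, h5, h6, h7⟩
    obtain ⟨k, hk⟩ : ∃ k, a - b = 2 * k := ⟨(a - b) / 2, by omega⟩
    refine ⟨(a - c, a - b, 0), ⟨k, 2*b - a - c, ?_, ?_, ?_, ?_, ?_, ?_⟩, ?_⟩
    · omega
    · omega
    · omega
    · omega
    · omega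
    · refine Prod.ext ?_ (Prod.ext ?_ rfl) <;> simp <;> omega
    · simp only [dual, Prod.mk.injEq]; omega

open Classical in
lemma phi_mk (a b c : ℤ) : phi (a, b, c) =
    if (a, b, c) ∈ E3 a then
      (a + 1, b, c)
    else if (Even (b + c) ∧ (a - 1, b + 1, c) ∉ E3 (a - 1)) ∨
        (¬ Even (b + c) ∧ (a - 1, b, c + 1) ∈ E3 (a - 1)) then
      (a, b + 1, c)
    else
      (a, b, c + 1) := rfl

/-- Full arithmetic description of `phi`. -/
lemma phi_spec (a b c : ℤ) :
    (EE a b c ∧ phi (a, b, c) = (a + 1, b, c)) ∨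
    (¬ EE a b c ∧ BB a b c ∧ phi (a, b, c) = (a, b + 1, c)) ∨
    (¬ EE a b c ∧ ¬ BB a b c ∧ phi (a, b, c) = (a, b, c + 1)) := by
  have hmem : ∀ b' c' : ℤ, ((a, b', c') ∈ E3 a ↔ EE a b' c') := by
    intro b' c'; rw [mem_E3_s9]; simp
  have hmem' : ∀ b' c' : ℤ, ((a - 1, b', c') ∈ E3 (a - 1) ↔ EE (a - 1) b' c') := by
    intro b' c'; rw [mem_E3_s9]; simp
  rw [phi_mk]
  split_ifs with h1 h2
  · exact Or.inl ⟨(hmem _ _).mp h1, rfl⟩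
  · refine Or.inr (Or.inl ⟨fun h => h1 ((hmem _ _).mpr h), ?_, rfl⟩)
    rcases h2 with ⟨he, hm⟩ | ⟨he, hm⟩
    · exact Or.inl ⟨Int.even_iff.mp he, fun h => hm ((hmem' _ _).mpr h)⟩
    · exact Or.inr ⟨fun h => he (Int.even_iff.mpr h), (hmem' _ _).mp hm⟩
  · refine Or.inr (Or.inr ⟨fun h => h1 ((hmem _ _).mpr h), fun h => h2 ?_, rfl⟩)
    rcases h with ⟨he, hm⟩ | ⟨he, hm⟩
    · exact Or.inl ⟨Int.even_iff.mpr he, fun h => hm ((hmem' _ _).mp h)⟩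
    · exact Or.inr ⟨fun h => he (Int.even_iff.mp h), (hmem' _ _).mpr hm⟩

set_option maxHeartbeats 2000000 in
/-- For every rank `i` below the middle rank, all rank-`i` elements lie outside
`E_{3,n}`, and `φ` restricts to an order matching from `L_i(3,n)` into
`L_{i+1}(3,n)`. -/
theorem phi_order_matching (n i : ℤ) (hn : 0 < n) (hi : 2 * i < 3 * n) :
    (∀ p ∈ L3 n, p.1 + p.2.1 + p.2.2 = i → p ∉ E3 n) ∧
    Set.InjOn phi {p | p ∈ L3 n ∧ p.1 + p.2.1 + p.2.2 = i} ∧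
    (∀ p ∈ L3 n, p.1 + p.2.1 + p.2.2 = i →
      phi p ∈ L3 n ∧ (phi p).1 + (phi p).2.1 + (phi p).2.2 = i + 1 ∧ p < phi p) := by
  refine ⟨?_, ?_, ?_⟩
  · rintro ⟨a, b, c⟩ hp hrank hmem
    simp only [L3, Set.mem_setOf_eq] at hp
    rw [mem_E3_s9] at hmem
    simp only at hrank
    unfold EE at hmem
    omega
  · rintro ⟨a, b, c⟩ hp ⟨d, e, f⟩ hq heq
    simp only [Set.mem_setOf_eq, L3] at hp hq
    rcases phi_spec a b c with hP | hP | hP <;>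
      rcases phi_spec d e f with hQ | hQ | hQ
    · obtain ⟨hA, hE⟩ := hP; obtain ⟨hA', hE'⟩ := hQ
      rw [hE, hE'] at heq; clear hE hE'
      simp only [Prod.mk.injEq] at heq ⊢
      simp only [EE] at hA hA'
      omega
    · obtain ⟨hA, hE⟩ := hP; obtain ⟨hA', hB', hE'⟩ := hQ
      rw [hE, hE'] at heq; clear hE hE'
      simp only [Prod.mk.injEq] at heq ⊢
      simp only [EE, BB] at hA hA' hB'
      omega
    · obtain ⟨hA, hE⟩ := hP; obtain ⟨hA', hB', hE'⟩ := hQ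
      rw [hE, hE'] at heq; clear hE hE'
      simp only [Prod.mk.injEq] at heq ⊢
      simp only [EE, BB] at hA hA' hB'
      omega
    · obtain ⟨hA, hB, hE⟩ := hP; obtain ⟨hA', hE'⟩ := hQ
      rw [hE, hE'] at heq; clear hE hE'
      simp only [Prod.mk.injEq] at heq ⊢
      simp only [EE, BB] at hA hB hA'
      omega
    · obtain ⟨hA, hB, hE⟩ := hP; obtain ⟨hA', hB', hE'⟩ := hQ
      rw [hE, hE'] at heq; clear hE hE'
      simp only [Prod.mk.injEq] at heq ⊢
      simp only [EE, BB] at hA hB hA' hB'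
      omega
    · -- p in branch B, q in branch C
      obtain ⟨hA, hB, hE⟩ := hP; obtain ⟨hA', hB', hE'⟩ := hQ
      rw [hE, hE'] at heq; clear hE hE'
      simp only [Prod.mk.injEq] at heq ⊢
      simp only [EE, BB] at hA hB hA' hB'
      obtain ⟨h4, h5, h6⟩ := heq
      exfalso
      rcases hB with ⟨h1, h2⟩ | ⟨h1, h2⟩
      · have h3 : (d - 1 - (e + 1)) % 2 = 0 ∧ e + 1 ≤ d - 1 ∧ 0 ≤ f ∧
            f + (d - 1) ≤ 2 * (e + 1) ∧ f + (d - 1) + 1 ≠ 2 * (e + 1) ∧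
            d - 1 ≤ 2 * (e + 1) + 2 * f := by
          clear hA hA' h2 hp hq hn hi
          omega
        clear hB' h2 hA
        omega
      · clear hB' hA
        omega
    · obtain ⟨hA, hB, hE⟩ := hP; obtain ⟨hA', hE'⟩ := hQ
      rw [hE, hE'] at heq; clear hE hE'
      simp only [Prod.mk.injEq] at heq ⊢
      simp only [EE, BB] at hA hB hA'
      omega
    · -- p in branch C, q in branch B
      obtain ⟨hA, hB, hE⟩ := hP; obtain ⟨hA', hB', hE'⟩ := hQ
      rw [hE, hE'] at heq; clear hE hE'
      simp only [Prod.mk.injEq] at heq ⊢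
      simp only [EE, BB] at hA hB hA' hB'
      obtain ⟨h4, h5, h6⟩ := heq
      exfalso
      rcases hB' with ⟨h1, h2⟩ | ⟨h1, h2⟩
      · have h3 : (a - 1 - (b + 1)) % 2 = 0 ∧ b + 1 ≤ a - 1 ∧ 0 ≤ c ∧
            c + (a - 1) ≤ 2 * (b + 1) ∧ c + (a - 1) + 1 ≠ 2 * (b + 1) ∧
            a - 1 ≤ 2 * (b + 1) + 2 * c := by
          clear hA hA' h2 hp hq hn hi
          omega
        clear hB h2 hA'
        omega
      · clear hB hA'
        omega
    · obtain ⟨hA, hB, hE⟩ := hP; obtain ⟨hA', hB', hE'⟩ := hQ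
      rw [hE, hE'] at heq; clear hE hE'
      simp only [Prod.mk.injEq] at heq ⊢
      simp only [EE, BB] at hA hB hA' hB'
      omega
  · rintro ⟨a, b, c⟩ hp hrank
    simp only [L3, Set.mem_setOf_eq] at hp
    simp only at hrank
    rcases phi_spec a b c with ⟨hA, hE⟩ | ⟨hA, hB, hE⟩ | ⟨hA, hB, hE⟩ <;>
      rw [hE] <;> simp only [BB, EE] at hA ⊢ <;>
      refine ⟨?_, ?_, ?_⟩
    · exact show a + 1 ≤ n ∧ b ≤ a + 1 ∧ c ≤ b ∧ 0 ≤ c by omega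
    · exact show a + 1 + b + c = i + 1 by omega
    · simp only [Prod.mk_lt_mk, Prod.mk_le_mk]; omega
    · simp only [BB, EE] at hB
      exact show a ≤ n ∧ b + 1 ≤ a ∧ c ≤ b + 1 ∧ 0 ≤ c by omega
    · exact show a + (b + 1) + c = i + 1 by omega
    · simp only [Prod.mk_lt_mk, Prod.mk_le_mk]; omega
    · simp only [BB, EE] at hB
      exact show a ≤ n ∧ b ≤ a ∧ c + 1 ≤ b ∧ 0 ≤ c + 1 by omega
    · exact show a + b + (c + 1) = i + 1 by omega
    · simp only [Prod.mk_lt_mk, Prod.mk_le_mk]; omega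
end

section
/- For all integers k ≥ 1 and c ≥ 0, the partition λ = (4k+c+1, 2k+c, c) satisfies: λ ∉ E_{3,λ1}, λ2+λ3 is even, and (λ1−1, λ2+1, λ3) ∉ E_{3,λ1−1}. -/
/-- Lemma (A₂): for `k ≥ 1`, `c ≥ 0`, `λ = (4k+c+1, 2k+c, c)` satisfies
`λ ∉ E_{3,λ₁}`, `λ₂ + λ₃` is even, and `(λ₁-1, λ₂+1, λ₃) ∉ E_{3,λ₁-1}`. -/
theorem lem_A2 (k c : ℤ) (hk : 1 ≤ k) (hc : 0 ≤ c) :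
    ((4 * k + c + 1, 2 * k + c, c) : ℤ × ℤ × ℤ) ∉ E3 (4 * k + c + 1) ∧
    Even ((2 * k + c) + c) ∧
    ((4 * k + c, 2 * k + c + 1, c) : ℤ × ℤ × ℤ) ∉ E3 (4 * k + c) := by
  refine ⟨?_, ⟨k + c, by ring⟩, ?_⟩
  · rintro ⟨p, ⟨k', ℓ, hk', hℓ, hℓ1, h1, h2, rfl⟩, hd⟩
    simp only [dual, Prod.mk.injEq] at hd
    omega
  · rintro ⟨p, ⟨k', ℓ, hk', hℓ, hℓ1, h1, h2, rfl⟩, hd⟩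
    simp only [dual, Prod.mk.injEq] at hd
    omega
end

section
/- For all integers k ≥ 1 and c ≥ 0, the partition λ = (4k+c+1, 2k+c+1, c) satisfies: λ ∉ E_{3,λ1}, λ2+λ3 is odd, and (λ1−1, λ2, λ3+1) ∉ E_{3,λ1−1}. -/
/-- Lemma (A₃): for `k ≥ 1`, `c ≥ 0`, `λ = (4k+c+1, 2k+c+1, c)` satisfies
`λ ∉ E_{3,λ₁}`, `λ₂ + λ₃` is odd, and `(λ₁-1, λ₂, λ₃+1) ∉ E_{3,λ₁-1}`. -/
theorem lem_A3 (k c : ℤ) (hk : 1 ≤ k) (hc : 0 ≤ c) :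
    ((4 * k + c + 1, 2 * k + c + 1, c) : ℤ × ℤ × ℤ) ∉ E3 (4 * k + c + 1) ∧
    Odd ((2 * k + c + 1) + c) ∧
    ((4 * k + c, 2 * k + c + 1, c + 1) : ℤ × ℤ × ℤ) ∉ E3 (4 * k + c) := by
  refine ⟨?_, ⟨k + c, by ring⟩, ?_⟩
  · rintro ⟨p, ⟨k', l, hk', hl, hl1, h1, h2, rfl⟩, heq⟩
    simp only [dual, Prod.mk.injEq] at heq
    omega
  · rintro ⟨p, ⟨k', l, hk', hl, hl1, h1, h2, rfl⟩, heq⟩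
    simp only [dual, Prod.mk.injEq] at heq
    omega
end

section
/- For all integers k ≥ 0, ℓ ≥ 2, and c with 1 ≤ c ≤ ℓ−2, the partition λ = (4k+ℓ, 2k+c, c) satisfies: λ ∉ E_{3,λ1}, λ2+λ3 is even, and (λ1−1, λ2+1, λ3) ∉ E_{3,λ1−1}. -/
/-- Lemma (B₂): for `k ≥ 0`, `ℓ ≥ 2`, `1 ≤ c ≤ ℓ-2`, `λ = (4k+ℓ, 2k+c, c)`
satisfies `λ ∉ E_{3,λ₁}`, `λ₂ + λ₃` is even, and `(λ₁-1, λ₂+1, λ₃) ∉ E_{3,λ₁-1}`. -/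
theorem lem_B2 (k l c : ℤ) (hk : 0 ≤ k) (hl : 2 ≤ l) (hc1 : 1 ≤ c) (hc2 : c ≤ l - 2) :
    ((4 * k + l, 2 * k + c, c) : ℤ × ℤ × ℤ) ∉ E3 (4 * k + l) ∧
    Even ((2 * k + c) + c) ∧
    ((4 * k + l - 1, 2 * k + c + 1, c) : ℤ × ℤ × ℤ) ∉ E3 (4 * k + l - 1) := by
  refine ⟨?_, ⟨k + c, by ring⟩, ?_⟩ <;>
  · rintro ⟨p, ⟨k', l', hk', hl', hne, h1, h2, rfl⟩, hd⟩
    simp only [dual, Prod.mk.injEq] at hd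
    omega
end

section
/- For all integers k ≥ 0, ℓ ≥ 2, and c with 1 ≤ c ≤ ℓ−3, the partition λ = (4k+ℓ, 2k+c+1, c) satisfies: λ ∉ E_{3,λ1}, λ2+λ3 is odd, and (λ1−1, λ2, λ3+1) ∉ E_{3,λ1−1}. -/
/-- Lemma (B₃): for `k ≥ 0`, `ℓ ≥ 2`, `1 ≤ c ≤ ℓ-3`, `λ = (4k+ℓ, 2k+c+1, c)`
satisfies `λ ∉ E_{3,λ₁}`, `λ₂ + λ₃` is odd, and `(λ₁-1, λ₂, λ₃+1) ∉ E_{3,λ₁-1}`. -/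
theorem lem_B3 (k l c : ℤ) (hk : 0 ≤ k) (hl : 2 ≤ l) (hc1 : 1 ≤ c) (hc2 : c ≤ l - 3) :
    ((4 * k + l, 2 * k + c + 1, c) : ℤ × ℤ × ℤ) ∉ E3 (4 * k + l) ∧
    Odd ((2 * k + c + 1) + c) ∧
    ((4 * k + l - 1, 2 * k + c + 1, c + 1) : ℤ × ℤ × ℤ) ∉ E3 (4 * k + l - 1) := by
  refine ⟨?_, ⟨k + c, by ring⟩, ?_⟩ <;>
  · rintro ⟨p, ⟨k', l', hk', hl', hne, h1, h2, rfl⟩, heq⟩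
    simp only [dual, Prod.ext_iff, Prod.mk.injEq] at heq
    omega
end

section
/- For all integers k ≥ 0, ℓ ≥ 2, and c ≥ 0, the partition λ = (4k+ℓ+c+1, 2k+ℓ+c, ℓ−2) satisfies λ ∉ E_{3,λ1}, and exactly one of the following holds: (1) λ2+λ3 is even and (λ1−1, λ2+1, λ3) ∉ E_{3,λ1−1}; or (2) λ2+λ3 is odd and (λ1−1, λ2, λ3+1) ∈ E_{3,λ1−1}. -/
/-- Lemma (C₂): for `k ≥ 0`, `ℓ ≥ 2`, `c ≥ 0`, `λ = (4k+ℓ+c+1, 2k+ℓ+c, ℓ-2)` satisfies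
`λ ∉ E_{3,λ₁}` and exactly one of:
(1) `λ₂ + λ₃` even and `(λ₁-1, λ₂+1, λ₃) ∉ E_{3,λ₁-1}`; or
(2) `λ₂ + λ₃` odd and `(λ₁-1, λ₂, λ₃+1) ∈ E_{3,λ₁-1}`. -/
theorem lem_C2 (k l c : ℤ) (hk : 0 ≤ k) (hl : 2 ≤ l) (hc : 0 ≤ c) :
    ((4 * k + l + c + 1, 2 * k + l + c, l - 2) : ℤ × ℤ × ℤ) ∉ E3 (4 * k + l + c + 1) ∧
    Xor'
      (Even ((2 * k + l + c) + (l - 2)) ∧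
        ((4 * k + l + c, 2 * k + l + c + 1, l - 2) : ℤ × ℤ × ℤ) ∉ E3 (4 * k + l + c))
      (Odd ((2 * k + l + c) + (l - 2)) ∧
        ((4 * k + l + c, 2 * k + l + c, l - 1) : ℤ × ℤ × ℤ) ∈ E3 (4 * k + l + c)) := by

  have key : ∀ (m : ℤ) (p : ℤ × ℤ × ℤ), p ∈ E3 m →
      ∃ k' l' : ℤ, 0 ≤ k' ∧ 0 ≤ l' ∧ l' ≠ 1 ∧ 4 * k' + l' ≤ m ∧ 2 * (6 * k' + l') ≤ 3 * m ∧
        p = (m, m - 2 * k', m - (4 * k' + l')) := by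
    rintro m p ⟨q, ⟨k', l', hk', hl', hl1, h4, h6, rfl⟩, rfl⟩
    exact ⟨k', l', hk', hl', hl1, h4, h6, by simp [dual]⟩
  constructor
  · intro h
    obtain ⟨k', l', hk', hl', hl1, h4, h6, heq⟩ := key _ _ h
    simp [Prod.ext_iff] at heq
    omega
  · rcases Int.even_or_odd c with hce | hco
    · refine Or.inl ⟨⟨?_, ?_⟩, ?_⟩
      · rw [Int.even_iff] at hce ⊢; omega
      · intro h
        obtain ⟨k', l', hk', hl', hl1, h4, h6, heq⟩ := key _ _ h
        simp [Prod.ext_iff] at heq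
        omega
      · rintro ⟨hodd, -⟩
        rw [Int.odd_iff] at hodd
        rw [Int.even_iff] at hce
        omega
    · refine Or.inr ⟨⟨?_, ?_⟩, ?_⟩
      · rw [Int.odd_iff] at hco ⊢; omega
      · refine ⟨(4 * k + (c + 1), 2 * k, 0), ⟨k, c + 1, hk, by omega, ?_, by omega, by omega, rfl⟩, ?_⟩
        · rw [Int.odd_iff] at hco; omega
        · simp [dual, Prod.ext_iff]; omega
      · rintro ⟨heven, -⟩
        rw [Int.even_iff] at heven
        rw [Int.odd_iff] at hco
        omega
end
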